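/- arXiv:2209.01323 — 2 statements merged into one kernel-verified Lean document; each statement's English description precedes it below -/
import Mathlib

section
/- Let $f \in L^p(S, \alpha)$, i.e. $\int_S |f|^p (1-y^2)^{-\alpha}\,dA < \infty$ on the strip $S = \{x+iy : |y| \le 1\}$. Then $f \in L^p(S,\alpha)$ if and only if $\int_{-\infty}^{\infty}\left(\int_{C_t} |f(z)|^p (1-y^2)^{-(\alpha - 1/2)}\,ds\right) dt < \infty$, where $C_t$ is the unit circle centered at $t \in \mathbb{R}$ and $ds$ is arclength on $C_t$. -/
open MeasureTheory Filter Set Complex Real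
open scoped ENNReal NNReal

namespace LpStripAux

/-- The integral of `‖f‖^p` along the horizontal line at height `y`. -/
noncomputable def g (p : ℝ) (f : ℂ → ℂ) (y : ℝ) : ℝ≥0∞ :=
  ∫⁻ x : ℝ, ENNReal.ofReal (‖f (x + y * Complex.I)‖ ^ p)

/-- The weighted line integral. -/
noncomputable def G (p α : ℝ) (f : ℂ → ℂ) (y : ℝ) : ℝ≥0∞ :=
  g p f y * ENNReal.ofReal ((1 - y ^ 2) ^ (-α))

lemma measurable_rpow_const {β : Type*} [MeasurableSpace β] {b : β → ℝ}
    (hb : Measurable b) (c : ℝ) :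
    Measurable fun x => b x ^ c := by
  have key : (fun x => b x ^ c) = fun x =>
      if b x < 0 then Real.exp (Real.log (b x) * c) * Real.cos (c * π)
      else if b x = 0 then (0 : ℝ) ^ c else Real.exp (Real.log (b x) * c) := by
    ext x
    rcases lt_trichotomy (b x) 0 with h | h | h
    · rw [if_pos h, Real.rpow_def_of_neg h]
    · rw [if_neg (by simp [h]), if_pos h, h]
    · rw [if_neg (not_lt.2 h.le), if_neg h.ne', Real.rpow_def_of_pos h]
  rw [key]
  apply Measurable.ite (hb measurableSet_Iio)
  · exact (Real.measurable_exp.comp ((Real.measurable_log.comp hb).mul_const c)).mul_const _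
  · exact Measurable.ite (hb (measurableSet_singleton 0)) measurable_const
      (Real.measurable_exp.comp ((Real.measurable_log.comp hb).mul_const c))

lemma cos_zero_null : (volume : Measure ℝ) {θ : ℝ | Real.cos θ = 0} = 0 := by
  have hsub : {θ : ℝ | Real.cos θ = 0} ⊆ Set.range (fun n : ℤ => (2 * (n : ℝ) + 1) * π / 2) := by
    intro θ hθ
    rcases Real.cos_eq_zero_iff.mp hθ with ⟨n, hn⟩
    exact ⟨n, hn.symm⟩
  exact measure_mono_null hsub ((Set.countable_range _).measure_zero _)

lemma meas_aux (p : ℝ) (hp : 0 ≤ p) (f : ℂ → ℂ) (hf : Measurable f) (y : ℝ) :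
    Measurable fun x : ℝ => ENNReal.ofReal (‖f (x + y * Complex.I)‖ ^ p) := by
  have h1 : Measurable fun x : ℝ => f (x + y * Complex.I) :=
    hf.comp (Complex.measurable_ofReal.add measurable_const)
  exact ENNReal.measurable_ofReal.comp
    ((Real.continuous_rpow_const hp).measurable.comp h1.norm)

/-- Substitution `y = sin θ` on a set where `sin` is injective. -/
lemma piece (p α : ℝ) (f : ℂ → ℂ) {s : Set ℝ} (hs : MeasurableSet s)
    (hinj : InjOn Real.sin s) :
    ∫⁻ θ in s, g p f (Real.sin θ) *
        ENNReal.ofReal ((1 - Real.sin θ ^ 2) ^ (-(α - 1/2)))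
      = ∫⁻ y in Real.sin '' s, G p α f y := by
  have hd : ∀ x ∈ s, HasFDerivWithinAt Real.sin
      ((1 : ℝ →L[ℝ] ℝ).smulRight (Real.cos x)) s x := fun x _ =>
    (Real.hasDerivAt_sin x).hasDerivWithinAt.hasFDerivWithinAt
  rw [lintegral_image_eq_lintegral_abs_det_fderiv_mul volume hs hd hinj]
  refine (lintegral_congr_ae (ae_restrict_of_ae ?_)).symm
  have hae : ∀ᵐ θ : ℝ, Real.cos θ ≠ 0 := by
    rw [ae_iff]
    simpa using cos_zero_null
  filter_upwards [hae] with θ hθ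
  have hc : (0:ℝ) < 1 - Real.sin θ ^ 2 := by
    have := Real.cos_sq' θ
    nlinarith [sq_pos_of_ne_zero hθ]
  have habs : |Real.cos θ| = (1 - Real.sin θ ^ 2) ^ (1/2 : ℝ) := by
    rw [← Real.sqrt_eq_rpow, ← Real.cos_sq', Real.sqrt_sq_eq_abs]
  have hrw : |Real.cos θ| * (1 - Real.sin θ ^ 2) ^ (-α)
      = (1 - Real.sin θ ^ 2) ^ (-(α - 1/2)) := by
    rw [habs, ← Real.rpow_add hc]
    ring_nf
  rw [ContinuousLinearMap.smulRight_one_eq_toSpanSingleton, ContinuousLinearMap.det_toSpanSingleton]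
  simp only [G]
  rw [← hrw, ENNReal.ofReal_mul (abs_nonneg _)]
  ring

lemma sub_range_pi (θ : ℝ) (h : θ ∈ Icc (3 * π / 2) (2 * π)) :
    θ - 2 * π ∈ Icc (-(π/2)) (π/2) := by
  have hπ := Real.pi_pos
  constructor <;> [linarith [h.1]; linarith [h.2]]

lemma inj1 : InjOn Real.sin (Icc 0 (π/2)) := by
  have hπ := Real.pi_pos
  apply Real.injOn_sin.mono
  intro x hx
  exact ⟨by linarith [hx.1], hx.2⟩

lemma inj2 : InjOn Real.sin (Icc (π/2) (3 * π / 2)) := by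
  intro a ha b hb hab
  have h1 : Real.sin (π - a) = Real.sin (π - b) := by
    rw [Real.sin_pi_sub, Real.sin_pi_sub]; exact hab
  have hm : ∀ x : ℝ, x ∈ Icc (π/2) (3 * π / 2) → π - x ∈ Icc (-(π/2)) (π/2) := by
    intro x hx
    exact ⟨by linarith [hx.2], by linarith [hx.1]⟩
  have := Real.injOn_sin (hm a ha) (hm b hb) h1
  linarith

lemma inj3 : InjOn Real.sin (Icc (3 * π / 2) (2 * π)) := by
  intro a ha b hb hab
  have h1 : Real.sin (a - 2 * π) = Real.sin (b - 2 * π) := by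
    rw [Real.sin_sub_two_pi, Real.sin_sub_two_pi]; exact hab
  have := Real.injOn_sin (sub_range_pi a ha) (sub_range_pi b hb) h1
  linarith

lemma image2_sub : Icc (-1 : ℝ) 1 ⊆ Real.sin '' (Icc (π/2) (3 * π / 2)) := by
  have hπ := Real.pi_pos
  have hle : π / 2 ≤ 3 * π / 2 := by linarith
  have hcont : ContinuousOn Real.sin (Icc (π/2) (3 * π / 2)) :=
    Real.continuous_sin.continuousOn
  have key := intermediate_value_Icc' hle hcont
  have h1 : Real.sin (3 * π / 2) = -1 := by
    have h : (3 : ℝ) * π / 2 = π / 2 + π := by ring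
    rw [h, Real.sin_add_pi, Real.sin_pi_div_two]
  intro y hy
  apply key
  rw [h1, Real.sin_pi_div_two]
  exact hy

lemma image_sub_Icc (s : Set ℝ) : Real.sin '' s ⊆ Icc (-1 : ℝ) 1 := by
  rintro y ⟨θ, _, rfl⟩
  exact ⟨Real.neg_one_le_sin θ, Real.sin_le_one θ⟩

lemma lhs_eq (p α : ℝ) (hp : 0 ≤ p) (f : ℂ → ℂ) (hf : Measurable f) :
    ∫⁻ z in {z : ℂ | |z.im| ≤ 1}, ENNReal.ofReal (‖f z‖ ^ p * (1 - z.im ^ 2) ^ (-α))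
      = ∫⁻ y in Icc (-1 : ℝ) 1, G p α f y := by
  have hmh : Measurable fun z : ℂ =>
      ENNReal.ofReal (‖f z‖ ^ p * (1 - z.im ^ 2) ^ (-α)) := by
    apply ENNReal.measurable_ofReal.comp
    exact ((Real.continuous_rpow_const hp).measurable.comp hf.norm).mul
      (measurable_rpow_const (measurable_const.sub (Complex.measurable_im.pow measurable_const))
        (-α))
  have hemb := Complex.measurableEquivRealProd.symm.measurableEmbedding
  have hmp : MeasurePreserving (Complex.measurableEquivRealProd.symm) volume volume :=
    Complex.volume_preserving_equiv_real_prod.symm _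
  rw [← hmp.setLIntegral_comp_preimage_emb hemb
      (fun z => ENNReal.ofReal (‖f z‖ ^ p * (1 - z.im ^ 2) ^ (-α))) _]
  have hpre : Complex.measurableEquivRealProd.symm ⁻¹' {z : ℂ | |z.im| ≤ 1}
      = (univ : Set ℝ) ×ˢ Icc (-1 : ℝ) 1 := by
    ext q
    simp [Complex.measurableEquivRealProd_symm_apply, abs_le]
  rw [hpre]
  have hrestr : (volume : Measure (ℝ × ℝ)).restrict ((univ : Set ℝ) ×ˢ Icc (-1 : ℝ) 1)
      = (volume : Measure ℝ).prod ((volume : Measure ℝ).restrict (Icc (-1 : ℝ) 1)) := by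
    rw [Measure.volume_eq_prod, ← Measure.prod_restrict, Measure.restrict_univ]
  rw [hrestr]
  rw [lintegral_prod_symm _ (by exact (hmh.comp hemb.measurable).aemeasurable)]
  refine lintegral_congr fun y => ?_
  have harg : ∀ x : ℝ, Complex.measurableEquivRealProd.symm (x, y) = (x : ℂ) + y * Complex.I := by
    intro x
    rw [Complex.measurableEquivRealProd_symm_apply]
    exact Complex.mk_eq_add_mul_I x y
  calc ∫⁻ x : ℝ, ENNReal.ofReal (‖f (Complex.measurableEquivRealProd.symm (x, y))‖ ^ p *
          (1 - (Complex.measurableEquivRealProd.symm (x, y)).im ^ 2) ^ (-α))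
      = ∫⁻ x : ℝ, ENNReal.ofReal (‖f ((x : ℂ) + y * Complex.I)‖ ^ p) *
          ENNReal.ofReal ((1 - y ^ 2) ^ (-α)) := by
        refine lintegral_congr fun x => ?_
        rw [harg x]
        simp only [Complex.add_im, Complex.ofReal_im, Complex.mul_I_im, Complex.ofReal_re,
          zero_add]
        rw [ENNReal.ofReal_mul (Real.rpow_nonneg (norm_nonneg _) _)]
    _ = g p f y * ENNReal.ofReal ((1 - y ^ 2) ^ (-α)) := by
        rw [lintegral_mul_const _ (meas_aux p hp f hf y)]
        rfl

lemma rhs_eq (p α : ℝ) (hp : 0 ≤ p) (f : ℂ → ℂ) (hf : Measurable f) :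
    (∫⁻ t : ℝ, ∫⁻ θ in Icc (0:ℝ) (2 * π),
        ENNReal.ofReal (‖f (t + Complex.exp (θ * Complex.I))‖ ^ p *
          (1 - (Real.sin θ) ^ 2) ^ (-(α - 1/2))))
      = ∫⁻ θ in Icc (0:ℝ) (2 * π), g p f (Real.sin θ) *
          ENNReal.ofReal ((1 - Real.sin θ ^ 2) ^ (-(α - 1/2))) := by
  have hcont : Continuous fun q : ℝ × ℝ => (q.1 : ℂ) + Complex.exp (q.2 * Complex.I) := by
    apply Continuous.add
    · exact Complex.continuous_ofReal.comp continuous_fst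
    · exact Complex.continuous_exp.comp
        ((Complex.continuous_ofReal.comp continuous_snd).mul continuous_const)
  have hm : Measurable (Function.uncurry fun t θ : ℝ =>
      ENNReal.ofReal (‖f (t + Complex.exp (θ * Complex.I))‖ ^ p *
        (1 - (Real.sin θ) ^ 2) ^ (-(α - 1/2)))) := by
    apply ENNReal.measurable_ofReal.comp
    apply Measurable.mul
    · exact (Real.continuous_rpow_const hp).measurable.comp
        ((hf.comp hcont.measurable).norm)
    · exact (measurable_rpow_const
        (measurable_const.sub ((Real.measurable_sin.comp measurable_snd).pow measurable_const))
        (-(α - 1/2)))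
  rw [lintegral_lintegral_swap hm.aemeasurable]
  refine lintegral_congr fun θ => ?_
  have harg : ∀ t : ℝ, (t : ℂ) + Complex.exp (θ * Complex.I)
      = ((t + Real.cos θ : ℝ) : ℂ) + (Real.sin θ : ℝ) * Complex.I := by
    intro t
    rw [Complex.exp_mul_I]
    push_cast
    ring
  calc ∫⁻ t : ℝ, ENNReal.ofReal (‖f (t + Complex.exp (θ * Complex.I))‖ ^ p *
          (1 - Real.sin θ ^ 2) ^ (-(α - 1/2)))
      = ∫⁻ t : ℝ, ENNReal.ofReal (‖f (((t + Real.cos θ : ℝ) : ℂ) +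
            (Real.sin θ : ℝ) * Complex.I)‖ ^ p) *
          ENNReal.ofReal ((1 - Real.sin θ ^ 2) ^ (-(α - 1/2))) := by
        refine lintegral_congr fun t => ?_
        rw [harg t, ENNReal.ofReal_mul (Real.rpow_nonneg (norm_nonneg _) _)]
    _ = (∫⁻ t : ℝ, ENNReal.ofReal (‖f (((t + Real.cos θ : ℝ) : ℂ) +
            (Real.sin θ : ℝ) * Complex.I)‖ ^ p)) *
          ENNReal.ofReal ((1 - Real.sin θ ^ 2) ^ (-(α - 1/2))) := by
        refine lintegral_mul_const _ ?_
        exact (meas_aux p hp f hf (Real.sin θ)).comp (measurable_id.add_const (Real.cos θ))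
    _ = g p f (Real.sin θ) * ENNReal.ofReal ((1 - Real.sin θ ^ 2) ^ (-(α - 1/2))) := by
        congr 1
        exact lintegral_add_right_eq_self
          (fun x : ℝ => ENNReal.ofReal (‖f ((x : ℂ) + (Real.sin θ : ℝ) * Complex.I)‖ ^ p))
          (Real.cos θ)

end LpStripAux

open LpStripAux in
/-- `f ∈ L^p(S, α)` if and only if the iterated integral of `|f|^p (1-y²)^{-(α-1/2)}`
over the circles `C_t = {z : |z - t| = 1}` (in arclength, parametrized by angle) and
then over `t ∈ ℝ` is finite.  Here `S = {x+iy : |y| ≤ 1}`. -/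
theorem Lp_strip_iff_circle (p α : ℝ) (hp : 1 < p) (hα0 : 1/2 ≤ α) (hα1 : α < 1)
    (f : ℂ → ℂ) (hf : Measurable f) :
    (∫⁻ z in {z : ℂ | |z.im| ≤ 1},
        ENNReal.ofReal (‖f z‖ ^ p * (1 - z.im ^ 2) ^ (-α)) < ⊤) ↔
    (∫⁻ t : ℝ, ∫⁻ θ in Icc (0:ℝ) (2 * π),
        ENNReal.ofReal (‖f (t + Complex.exp (θ * Complex.I))‖ ^ p *
          (1 - (Real.sin θ) ^ 2) ^ (-(α - 1/2))) < ⊤) := by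
  have hp0 : (0:ℝ) ≤ p := le_of_lt (lt_trans one_pos hp)
  have hπ := Real.pi_pos
  rw [lhs_eq p α hp0 f hf, rhs_eq p α hp0 f hf]
  have p1 := piece p α f (measurableSet_Icc : MeasurableSet (Icc 0 (π/2))) inj1
  have p2 := piece p α f (measurableSet_Icc : MeasurableSet (Icc (π/2) (3 * π / 2))) inj2
  have p3 := piece p α f (measurableSet_Icc : MeasurableSet (Icc (3 * π / 2) (2 * π))) inj3
  set L := ∫⁻ y in Icc (-1 : ℝ) 1, G p α f y with hL
  constructor
  · intro hLfin
    have hb : ∀ s : Set ℝ, MeasurableSet s → InjOn Real.sin s →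
        (∫⁻ θ in s, g p f (Real.sin θ) *
            ENNReal.ofReal ((1 - Real.sin θ ^ 2) ^ (-(α - 1/2)))) ≤ L := by
      intro s hs hinj
      rw [piece p α f hs hinj]
      exact lintegral_mono_set (image_sub_Icc s)
    have hsub : Icc (0:ℝ) (2 * π) ⊆
        Icc 0 (π/2) ∪ (Icc (π/2) (3 * π / 2) ∪ Icc (3 * π / 2) (2 * π)) := by
      intro θ hθ
      rcases le_total θ (π/2) with h | h
      · exact Or.inl ⟨hθ.1, h⟩
      rcases le_total θ (3 * π / 2) with h2 | h2
      · exact Or.inr (Or.inl ⟨h, h2⟩)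
      · exact Or.inr (Or.inr ⟨h2, hθ.2⟩)
    calc (∫⁻ θ in Icc (0:ℝ) (2 * π), g p f (Real.sin θ) *
            ENNReal.ofReal ((1 - Real.sin θ ^ 2) ^ (-(α - 1/2))))
        ≤ ∫⁻ θ in Icc 0 (π/2) ∪ (Icc (π/2) (3 * π / 2) ∪ Icc (3 * π / 2) (2 * π)),
            g p f (Real.sin θ) * ENNReal.ofReal ((1 - Real.sin θ ^ 2) ^ (-(α - 1/2))) :=
          lintegral_mono_set hsub
      _ ≤ (∫⁻ θ in Icc 0 (π/2), g p f (Real.sin θ) *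
              ENNReal.ofReal ((1 - Real.sin θ ^ 2) ^ (-(α - 1/2)))) +
            ((∫⁻ θ in Icc (π/2) (3 * π / 2), g p f (Real.sin θ) *
              ENNReal.ofReal ((1 - Real.sin θ ^ 2) ^ (-(α - 1/2)))) +
            (∫⁻ θ in Icc (3 * π / 2) (2 * π), g p f (Real.sin θ) *
              ENNReal.ofReal ((1 - Real.sin θ ^ 2) ^ (-(α - 1/2))))) := by
          refine le_trans (lintegral_union_le _ _ _) ?_
          exact add_le_add le_rfl (lintegral_union_le _ _ _)
      _ ≤ L + (L + L) := by
          gcongr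
          · exact hb _ measurableSet_Icc inj1
          · exact hb _ measurableSet_Icc inj2
          · exact hb _ measurableSet_Icc inj3
      _ < ⊤ := by
          exact ENNReal.add_lt_top.2 ⟨hLfin, ENNReal.add_lt_top.2 ⟨hLfin, hLfin⟩⟩
  · intro hR
    have hsub2 : Icc (π/2) (3 * π / 2) ⊆ Icc (0:ℝ) (2 * π) := by
      intro θ hθ
      exact ⟨by linarith [hθ.1], by linarith [hθ.2]⟩
    calc L ≤ ∫⁻ y in Real.sin '' Icc (π/2) (3 * π / 2), G p α f y :=
          lintegral_mono_set image2_sub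
      _ = ∫⁻ θ in Icc (π/2) (3 * π / 2), g p f (Real.sin θ) *
            ENNReal.ofReal ((1 - Real.sin θ ^ 2) ^ (-(α - 1/2))) := p2.symm
      _ ≤ ∫⁻ θ in Icc (0:ℝ) (2 * π), g p f (Real.sin θ) *
            ENNReal.ofReal ((1 - Real.sin θ ^ 2) ^ (-(α - 1/2))) :=
          lintegral_mono_set hsub2
      _ < ⊤ := hR
end

section
/- Let $F$ be an entire function on $\mathbb{C}$ such that $\sup_{y > 0} \int_{-\infty}^{\infty} |F(x+iy)| \frac{dx}{1+x^2} < \infty$ and $\sup_{y < 0} \int_{-\infty}^{\infty} |F(x+iy)| \frac{dx}{1+x^2} < \infty$ (i.e. $F$ belongs to the $H^1$ spaces of both the upper and lower half-planes with respect to the measure $\frac{dt}{1+t^2}$). Then $F$ is constant. -/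
open MeasureTheory Filter Complex Set Metric Bornology
open scoped ENNReal Real

private lemma lintegral_comp_polarCoord_symm_real' (f : ℝ × ℝ → ℝ≥0∞) :
    (∫⁻ p in polarCoord.target, ENNReal.ofReal p.1 * f (polarCoord.symm p)) = ∫⁻ p, f p := by
  set B : ℝ × ℝ → ℝ × ℝ →L[ℝ] ℝ × ℝ := fun p =>
    LinearMap.toContinuousLinearMap (Matrix.toLin (Module.Basis.finTwoProd ℝ) (Module.Basis.finTwoProd ℝ)
      !![Real.cos p.2, -p.1 * Real.sin p.2; Real.sin p.2, p.1 * Real.cos p.2])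
  have A : ∀ p ∈ polarCoord.target, HasFDerivWithinAt polarCoord.symm (B p) polarCoord.target p :=
    fun p _ => (hasFDerivAt_polarCoord_symm p).hasFDerivWithinAt
  have B_det : ∀ p, (B p).det = p.1 := by
    intro p
    conv_rhs => rw [← one_mul p.1, ← Real.cos_sq_add_sin_sq p.2]
    simp only [B, neg_mul, LinearMap.det_toContinuousLinearMap, LinearMap.det_toLin,
      Matrix.det_fin_two_of, sub_neg_eq_add]
    ring
  symm
  calc
    ∫⁻ p, f p = ∫⁻ p in polarCoord.source, f p := by
      rw [← setLIntegral_univ]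
      exact setLIntegral_congr polarCoord_source_ae_eq_univ.symm
    _ = ∫⁻ p in polarCoord.symm '' polarCoord.target, f p := by
      rw [polarCoord.symm_image_target_eq_source]
    _ = ∫⁻ p in polarCoord.target, ENNReal.ofReal |(B p).det| * f (polarCoord.symm p) := by
      exact lintegral_image_eq_lintegral_abs_det_fderiv_mul volume
        polarCoord.open_target.measurableSet A polarCoord.symm.injOn f
    _ = ∫⁻ p in polarCoord.target, ENNReal.ofReal p.1 * f (polarCoord.symm p) := by
      refine setLIntegral_congr_fun polarCoord.open_target.measurableSet
        (fun x hx => ?_)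
      rw [B_det, abs_of_pos hx.1]

private lemma complex_lintegral_comp_polarCoord_symm' (f : ℂ → ℝ≥0∞) :
    (∫⁻ p in polarCoord.target, ENNReal.ofReal p.1 * f (Complex.polarCoord.symm p))
      = ∫⁻ w, f w := by
  rw [← (Complex.volume_preserving_equiv_real_prod.symm).lintegral_comp_emb
    Complex.measurableEquivRealProd.symm.measurableEmbedding,
    ← lintegral_comp_polarCoord_symm_real']
  rfl

private lemma lineBound' (F : ℂ → ℂ) (hFc : Continuous F) (M : ℝ) (y : ℝ)
    (hM : ∫⁻ x : ℝ, ENNReal.ofReal (‖F (x + y * Complex.I)‖ / (1 + x ^ 2)) ≤ ENNReal.ofReal M)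
    (K : ℝ) :
    ∫⁻ x in Icc (-K) K, ENNReal.ofReal ‖F (x + y * Complex.I)‖
      ≤ ENNReal.ofReal ((1 + K ^ 2) * M) := by
  have h1 : ∀ x ∈ Icc (-K) K, ENNReal.ofReal ‖F (x + y * Complex.I)‖
      ≤ ENNReal.ofReal (1 + K ^ 2) * ENNReal.ofReal (‖F (x + y * Complex.I)‖ / (1 + x ^ 2)) := by
    intro x hx
    rw [← ENNReal.ofReal_mul (by positivity)]
    apply ENNReal.ofReal_le_ofReal
    have hx2 : x ^ 2 ≤ K ^ 2 := sq_le_sq' hx.1 hx.2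
    have h0 : (0:ℝ) < 1 + x ^ 2 := by positivity
    rw [mul_div_assoc', le_div_iff₀ h0]
    have : (0:ℝ) ≤ ‖F (x + y * Complex.I)‖ := norm_nonneg _
    nlinarith
  calc ∫⁻ x in Icc (-K) K, ENNReal.ofReal ‖F (x + y * Complex.I)‖
      ≤ ∫⁻ x in Icc (-K) K, ENNReal.ofReal (1 + K ^ 2)
          * ENNReal.ofReal (‖F (x + y * Complex.I)‖ / (1 + x ^ 2)) :=
        setLIntegral_mono' measurableSet_Icc h1
    _ ≤ ENNReal.ofReal (1 + K ^ 2)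
          * ∫⁻ x : ℝ, ENNReal.ofReal (‖F (x + y * Complex.I)‖ / (1 + x ^ 2)) := by
        rw [lintegral_const_mul' _ _ ENNReal.ofReal_ne_top]
        exact mul_le_mul_right (setLIntegral_le_lintegral _ _) _
    _ ≤ ENNReal.ofReal (1 + K ^ 2) * ENNReal.ofReal M := mul_le_mul_right hM _
    _ ≤ ENNReal.ofReal ((1 + K ^ 2) * M) := by
        rw [ENNReal.ofReal_mul (by positivity)]

private lemma rectBound' (F : ℂ → ℂ) (hFc : Continuous F) (M K L : ℝ) (hL : 0 ≤ L)
    (h : ∀ y : ℝ, y ≠ 0 →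
      ∫⁻ x : ℝ, ENNReal.ofReal (‖F (x + y * Complex.I)‖ / (1 + x ^ 2)) ≤ ENNReal.ofReal M) :
    ∫⁻ w in Complex.measurableEquivRealProd ⁻¹' (Icc (-K) K ×ˢ Icc (-L) L),
      ENNReal.ofReal ‖F w‖ ≤ ENNReal.ofReal (2 * L * ((1 + K ^ 2) * M)) := by
  have key := Complex.volume_preserving_equiv_real_prod.setLIntegral_comp_preimage_emb
    Complex.measurableEquivRealProd.measurableEmbedding
    (fun p => ENNReal.ofReal ‖F (p.1 + p.2 * Complex.I)‖) (Icc (-K) K ×ˢ Icc (-L) L)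
  simp only [Complex.measurableEquivRealProd_apply] at key
  have key2 : ∀ w : ℂ, ENNReal.ofReal ‖F (↑w.re + ↑w.im * Complex.I)‖ = ENNReal.ofReal ‖F w‖ := by
    intro w; rw [Complex.re_add_im]
  simp only [key2] at key
  rw [key]
  have hmeas : Measurable fun p : ℝ × ℝ => ENNReal.ofReal ‖F (p.1 + p.2 * Complex.I)‖ := by
    apply ENNReal.measurable_ofReal.comp
    exact (hFc.comp (by continuity)).norm.measurable
  calc ∫⁻ p : ℝ × ℝ in Icc (-K) K ×ˢ Icc (-L) L, ENNReal.ofReal ‖F (p.1 + p.2 * Complex.I)‖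
      = ∫⁻ y in Icc (-L) L, ∫⁻ x in Icc (-K) K,
          ENNReal.ofReal ‖F (x + y * Complex.I)‖ := by
        rw [Measure.volume_eq_prod, ← Measure.prod_restrict]
        exact lintegral_prod_symm _ hmeas.aemeasurable
    _ ≤ ∫⁻ _ in Icc (-L) L, ENNReal.ofReal ((1 + K ^ 2) * M) := by
        apply lintegral_mono_ae
        have h0 : ∀ᵐ y : ℝ ∂(volume.restrict (Icc (-L) L)), y ≠ 0 := by
          refine ae_restrict_of_ae ?_
          filter_upwards [measure_eq_zero_iff_ae_notMem.mp Real.volume_singleton] with y hy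
          simpa using hy
        filter_upwards [h0] with y hy
        exact lineBound' F hFc M y (h y hy) K
    _ ≤ ENNReal.ofReal (2 * L * ((1 + K ^ 2) * M)) := by
        rw [setLIntegral_const, Real.volume_Icc, show L - -L = 2 * L by ring,
          ← ENNReal.ofReal_mul' (by linarith)]
        exact ENNReal.ofReal_le_ofReal (le_of_eq (by ring))

private lemma z_add_polar' (z : ℂ) (r θ : ℝ) :
    z + Complex.polarCoord.symm (r, θ) = circleMap z r θ := by
  simp [circleMap, Complex.polarCoord_symm_apply, Complex.exp_mul_I]

private lemma annulusSelect' (F : ℂ → ℂ) (hFc : Continuous F) (z : ℂ) (R : ℝ) (hR : 0 < R)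
    (A : ℝ≥0∞) (hAtop : A ≠ ⊤)
    (hA : ∫⁻ w in closedBall z (2 * R), ENNReal.ofReal ‖F w‖ ≤ A) :
    ∃ r ∈ Icc R (2 * R), (∫⁻ θ in Ioo (-π) π, ENNReal.ofReal ‖F (circleMap z r θ)‖)
      ≤ 2 * (A + 1) / (ENNReal.ofReal R * ENNReal.ofReal R) := by
  have hoR0 : ENNReal.ofReal R ≠ 0 := by
    simp [ENNReal.ofReal_eq_zero, not_le, hR]
  have hoRtop : ENNReal.ofReal R ≠ ⊤ := ENNReal.ofReal_ne_top
  set f : ℂ → ℝ≥0∞ :=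
    fun w => (closedBall (0:ℂ) (2 * R)).indicator (fun w => ENNReal.ofReal ‖F (z + w)‖) w with hf
  have hftot : ∫⁻ w, f w ≤ A := by
    have hcomp : ∀ w : ℂ, f w
        = (closedBall z (2 * R)).indicator (fun w => ENNReal.ofReal ‖F w‖) (z + w) := by
      intro w
      simp only [hf]
      by_cases hw : w ∈ closedBall (0:ℂ) (2 * R)
      · rw [indicator_of_mem hw, indicator_of_mem]
        simpa [dist_eq_norm] using hw
      · rw [indicator_of_notMem hw, indicator_of_notMem]
        intro hc
        apply hw
        simpa [dist_eq_norm] using hc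
    calc ∫⁻ w, f w
        = ∫⁻ w, (closedBall z (2 * R)).indicator (fun w => ENNReal.ofReal ‖F w‖) (z + w) :=
          lintegral_congr hcomp
      _ = ∫⁻ w, (closedBall z (2 * R)).indicator (fun w => ENNReal.ofReal ‖F w‖) w :=
          lintegral_add_left_eq_self _ z
      _ = ∫⁻ w in closedBall z (2 * R), ENNReal.ofReal ‖F w‖ :=
          lintegral_indicator measurableSet_closedBall _
      _ ≤ A := hA
  have hpolar := complex_lintegral_comp_polarCoord_symm' f
  have hsub : Icc R (2 * R) ×ˢ Ioo (-π) π ⊆ polarCoord.target := by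
    rintro ⟨r, θ⟩ ⟨hr, hθ⟩
    exact ⟨lt_of_lt_of_le hR hr.1, hθ⟩
  have hbox : (ENNReal.ofReal R) * ∫⁻ p in Icc R (2 * R) ×ˢ Ioo (-π) π,
      ENNReal.ofReal ‖F (circleMap z p.1 p.2)‖ ≤ A := by
    refine le_trans ?_ (hpolar ▸ hftot)
    rw [← lintegral_const_mul' _ _ hoRtop]
    refine le_trans ?_ (lintegral_mono_set hsub)
    refine setLIntegral_mono' (measurableSet_Icc.prod measurableSet_Ioo) ?_
    rintro ⟨r, θ⟩ ⟨hr, hθ⟩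
    have hmem : Complex.polarCoord.symm (r, θ) ∈ closedBall (0:ℂ) (2 * R) := by
      rw [mem_closedBall_zero_iff]
      have : ‖Complex.polarCoord.symm (r, θ)‖ = |r| := Complex.norm_polarCoord_symm (r, θ)
      rw [this, abs_of_pos (lt_of_lt_of_le hR hr.1)]
      exact hr.2
    have heval : f (Complex.polarCoord.symm (r, θ))
        = ENNReal.ofReal ‖F (circleMap z r θ)‖ := by
      simp only [hf]
      rw [indicator_of_mem hmem, z_add_polar']
    rw [heval]
    exact mul_le_mul_left (ENNReal.ofReal_le_ofReal hr.1) _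
  set G : ℝ → ℝ≥0∞ := fun r => ∫⁻ θ in Ioo (-π) π, ENNReal.ofReal ‖F (circleMap z r θ)‖ with hG
  have hmeas2 : Measurable fun p : ℝ × ℝ => ENNReal.ofReal ‖F (circleMap z p.1 p.2)‖ := by
    apply ENNReal.measurable_ofReal.comp
    apply Continuous.measurable
    apply Continuous.norm
    apply hFc.comp
    have : Continuous fun p : ℝ × ℝ => circleMap z p.1 p.2 := by
      simp only [circleMap]
      fun_prop
    exact this
  have htonelli : ∫⁻ p in Icc R (2 * R) ×ˢ Ioo (-π) π,
      ENNReal.ofReal ‖F (circleMap z p.1 p.2)‖ = ∫⁻ r in Icc R (2 * R), G r := by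
    rw [Measure.volume_eq_prod, ← Measure.prod_restrict]
    exact lintegral_prod _ hmeas2.aemeasurable
  have hB : ∫⁻ r in Icc R (2 * R), G r ≤ A / ENNReal.ofReal R := by
    rw [ENNReal.le_div_iff_mul_le (Or.inl hoR0) (Or.inl hoRtop), mul_comm, ← htonelli]
    exact hbox
  by_contra hcon
  push_neg at hcon
  have hcov : Icc R (2 * R) ⊆ {r | 2 * (A + 1) / (ENNReal.ofReal R * ENNReal.ofReal R) ≤ G r} :=
    fun r hr => le_of_lt (hcon r hr)
  have hGmeas : AEMeasurable G (volume.restrict (Icc R (2 * R))) := by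
    have heq : G = fun r => ∫⁻ θ, (Ioo (-π) π).indicator (fun _ => (1:ℝ≥0∞)) θ
        * ENNReal.ofReal ‖F (circleMap z r θ)‖ := by
      funext r
      simp only [hG]
      rw [← lintegral_indicator measurableSet_Ioo]
      congr 1
      funext θ
      by_cases hθ : θ ∈ Ioo (-π) π <;> simp [hθ]
    rw [heq]
    exact (Measurable.lintegral_prod_right'
      (((measurable_const.indicator measurableSet_Ioo).comp measurable_snd).mul
        hmeas2)).aemeasurable
  set ε : ℝ≥0∞ := 2 * (A + 1) / (ENNReal.ofReal R * ENNReal.ofReal R) with hε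
  have hmarkov := mul_meas_ge_le_lintegral₀ hGmeas ε
  have hμ : (volume.restrict (Icc R (2 * R))) {x | ε ≤ G x} = ENNReal.ofReal R := by
    rw [Measure.restrict_apply' measurableSet_Icc,
      Set.inter_eq_self_of_subset_right hcov, Real.volume_Icc]
    congr 1
    ring
  rw [hμ] at hmarkov
  have hcalc : ε * ENNReal.ofReal R = 2 * (A + 1) / ENNReal.ofReal R := by
    rw [hε, div_eq_mul_inv, div_eq_mul_inv, ENNReal.mul_inv (Or.inl hoR0) (Or.inl hoRtop)]
    calc 2 * (A + 1) * ((ENNReal.ofReal R)⁻¹ * (ENNReal.ofReal R)⁻¹) * ENNReal.ofReal R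
        = 2 * (A + 1) * (ENNReal.ofReal R)⁻¹ * ((ENNReal.ofReal R)⁻¹ * ENNReal.ofReal R) := by
          ring
      _ = 2 * (A + 1) * (ENNReal.ofReal R)⁻¹ := by
          rw [ENNReal.inv_mul_cancel hoR0 hoRtop, mul_one]
  rw [hcalc] at hmarkov
  have h2A : 2 * (A + 1) ≤ A := by
    have h1 : 2 * (A + 1) / ENNReal.ofReal R ≤ A / ENNReal.ofReal R := le_trans hmarkov hB
    calc 2 * (A + 1) = 2 * (A + 1) / ENNReal.ofReal R * ENNReal.ofReal R :=
          (ENNReal.div_mul_cancel hoR0 hoRtop).symm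
      _ ≤ A / ENNReal.ofReal R * ENNReal.ofReal R := mul_le_mul_left h1 _
      _ = A := ENNReal.div_mul_cancel hoR0 hoRtop
  have hA1 : A + 1 ≤ A := le_trans (by calc A + 1 = 1 * (A + 1) := (one_mul _).symm
    _ ≤ 2 * (A + 1) := mul_le_mul_left one_le_two _) h2A
  exact absurd hA1 (not_le.mpr (ENNReal.lt_add_right hAtop one_ne_zero))

private lemma derivBound' (F : ℂ → ℂ) (hF : Differentiable ℂ F) (z : ℂ) (r : ℝ) (hr : 0 < r) :
    ‖deriv F z‖ ≤ (2 * π)⁻¹ * (r⁻¹ * ∫ θ in (-π)..π, ‖F (circleMap z r θ)‖) := by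
  have hper : ∫ θ in (0:ℝ)..(2 * π), ‖F (circleMap z r θ)‖
      = ∫ θ in (-π)..π, ‖F (circleMap z r θ)‖ := by
    have hp : Function.Periodic (fun θ => ‖F (circleMap z r θ)‖) (2 * π) :=
      ((periodic_circleMap z r).comp fun w => ‖F w‖)
    have h2 := hp.intervalIntegral_add_eq (t := 0) (s := -π)
    rw [zero_add, show -π + 2 * π = π by ring] at h2
    exact h2
  have hkey : deriv F z = (2 * π * I)⁻¹ •
      circleIntegral (fun w => (w - z) ^ (-2 : ℤ) • F w) z r := by
    have h := (hF.diffContOnCl (s := ball z r)).deriv_eq_smul_circleIntegral hr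
    have e : (fun w => (w - z) ^ (-2 : ℤ) • F w) = fun w => (1 / (w - z) ^ 2) • F w := by
      funext w; simp [zpow_neg, one_div]
    rw [e, h, smul_smul, inv_mul_cancel₀ Complex.two_pi_I_ne_zero, one_smul]
  rw [hkey, norm_smul]
  have h1 : ‖(2 * ↑π * I)⁻¹‖ = (2 * π)⁻¹ := by
    simp [norm_inv, abs_of_pos Real.pi_pos]
  rw [h1]
  apply mul_le_mul_of_nonneg_left _ (by positivity)
  rw [circleIntegral]
  calc ‖∫ θ in (0:ℝ)..(2 * π), deriv (circleMap z r) θ •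
          (circleMap z r θ - z) ^ (-2 : ℤ) • F (circleMap z r θ)‖
      ≤ ∫ θ in (0:ℝ)..(2 * π), ‖deriv (circleMap z r) θ •
          (circleMap z r θ - z) ^ (-2 : ℤ) • F (circleMap z r θ)‖ :=
        intervalIntegral.norm_integral_le_integral_norm (by positivity)
    _ = ∫ θ in (0:ℝ)..(2 * π), r⁻¹ * ‖F (circleMap z r θ)‖ := by
        apply intervalIntegral.integral_congr
        intro θ _
        show ‖deriv (circleMap z r) θ • (circleMap z r θ - z) ^ (-2 : ℤ) • F (circleMap z r θ)‖
          = r⁻¹ * ‖F (circleMap z r θ)‖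
        rw [norm_smul, norm_smul, deriv_circleMap, circleMap_sub_center, norm_zpow]
        simp only [norm_mul, norm_circleMap_zero, Complex.norm_I, mul_one,
          abs_of_pos hr]
        rw [zpow_neg, zpow_two]
        field_simp
    _ = r⁻¹ * ∫ θ in (0:ℝ)..(2 * π), ‖F (circleMap z r θ)‖ := by
        rw [intervalIntegral.integral_const_mul]
    _ = r⁻¹ * ∫ θ in (-π)..π, ‖F (circleMap z r θ)‖ := by rw [hper]

private lemma uniformDerivBound' (F : ℂ → ℂ) (hF : Differentiable ℂ F) (M : ℝ) (hM : 0 ≤ M)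
    (h : ∀ y : ℝ, y ≠ 0 →
      ∫⁻ x : ℝ, ENNReal.ofReal (‖F (x + y * Complex.I)‖ / (1 + x ^ 2)) ≤ ENNReal.ofReal M)
    (z : ℂ) : ‖deriv F z‖ ≤ (60 * M + 1) / π := by
  set R : ℝ := ‖z‖ + 1 with hRdef
  have hR1 : 1 ≤ R := by
    have := norm_nonneg z
    simp only [hRdef]; linarith
  have hR0 : 0 < R := lt_of_lt_of_le one_pos hR1
  set a : ℝ := 2 * (3 * R) * ((1 + (3 * R) ^ 2) * M) with ha
  have ha0 : 0 ≤ a := by positivity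
  set A : ℝ≥0∞ := ENNReal.ofReal a with hA
  have hsubset : closedBall z (2 * R) ⊆
      Complex.measurableEquivRealProd ⁻¹' (Icc (-(3 * R)) (3 * R) ×ˢ Icc (-(3 * R)) (3 * R)) := by
    intro w hw
    rw [mem_closedBall, dist_eq] at hw
    have hre : |w.re - z.re| ≤ 2 * R := by
      have := Complex.abs_re_le_norm (w - z)
      rw [Complex.sub_re] at this
      linarith
    have him : |w.im - z.im| ≤ 2 * R := by
      have := Complex.abs_im_le_norm (w - z)
      rw [Complex.sub_im] at this
      linarith
    have hzre : |z.re| ≤ R := le_trans (Complex.abs_re_le_norm z) (by simp [hRdef])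
    have hzim : |z.im| ≤ R := le_trans (Complex.abs_im_le_norm z) (by simp [hRdef])
    simp only [mem_preimage, Complex.measurableEquivRealProd_apply, mem_prod, mem_Icc]
    rw [abs_le] at hre him hzre hzim
    constructor
    · constructor <;> linarith
    · constructor <;> linarith
  have hArea : ∫⁻ w in closedBall z (2 * R), ENNReal.ofReal ‖F w‖ ≤ A := by
    refine le_trans (lintegral_mono_set hsubset) ?_
    exact rectBound' F hF.continuous M (3 * R) (3 * R) (by positivity) h
  obtain ⟨r, hrmem, hGr⟩ := annulusSelect' F hF.continuous z R hR0 A ENNReal.ofReal_ne_top hArea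
  have hrpos : 0 < r := lt_of_lt_of_le hR0 hrmem.1
  have hder := derivBound' F hF z r hrpos
  -- convert the interval integral into the lintegral
  have hcont : Continuous fun θ : ℝ => ‖F (circleMap z r θ)‖ :=
    (hF.continuous.comp (continuous_circleMap z r)).norm
  have hconv : ∫ θ in (-π)..π, ‖F (circleMap z r θ)‖
      = (∫⁻ θ in Ioo (-π) π, ENNReal.ofReal ‖F (circleMap z r θ)‖).toReal := by
    rw [intervalIntegral.integral_of_le (by linarith [Real.pi_pos]),
      integral_Ioc_eq_integral_Ioo,
      integral_eq_lintegral_of_nonneg_ae (Filter.Eventually.of_forall fun θ => norm_nonneg _)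
      hcont.aestronglyMeasurable.restrict]
  -- numeric bound
  have hRHSne : 2 * (A + 1) / (ENNReal.ofReal R * ENNReal.ofReal R) ≠ ⊤ := by
    refine (ENNReal.div_lt_top ?_ ?_).ne
    · exact ENNReal.mul_ne_top (by simp) (ENNReal.add_ne_top.mpr ⟨ENNReal.ofReal_ne_top, by simp⟩)
    · simp [mul_eq_zero, ENNReal.ofReal_eq_zero, not_le, hR0]
  have htoReal : (2 * (A + 1) / (ENNReal.ofReal R * ENNReal.ofReal R)).toReal
      = 2 * (a + 1) / (R * R) := by
    rw [ENNReal.toReal_div, ENNReal.toReal_mul, ENNReal.toReal_mul, ENNReal.toReal_add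
      ENNReal.ofReal_ne_top (by simp), ENNReal.toReal_ofReal ha0, ENNReal.toReal_ofReal hR0.le]
    simp
  have hT : ∫ θ in (-π)..π, ‖F (circleMap z r θ)‖ ≤ 2 * (a + 1) / (R * R) := by
    rw [hconv, ← htoReal]
    exact ENNReal.toReal_mono hRHSne hGr
  have hTnonneg : 0 ≤ ∫ θ in (-π)..π, ‖F (circleMap z r θ)‖ := by
    rw [hconv]; exact ENNReal.toReal_nonneg
  have hstep : ‖deriv F z‖ ≤ (2 * π)⁻¹ * (R⁻¹ * (2 * (a + 1) / (R * R))) := by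
    refine le_trans hder ?_
    apply mul_le_mul_of_nonneg_left _ (by positivity)
    have hrinv : r⁻¹ ≤ R⁻¹ := inv_anti₀ hR0 hrmem.1
    calc r⁻¹ * ∫ θ in (-π)..π, ‖F (circleMap z r θ)‖
        ≤ R⁻¹ * ∫ θ in (-π)..π, ‖F (circleMap z r θ)‖ :=
          mul_le_mul_of_nonneg_right hrinv hTnonneg
      _ ≤ R⁻¹ * (2 * (a + 1) / (R * R)) := mul_le_mul_of_nonneg_left hT (by positivity)
  refine le_trans hstep ?_
  have heq : (2 * π)⁻¹ * (R⁻¹ * (2 * (a + 1) / (R * R))) = (a + 1) / (π * R ^ 3) := by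
    field_simp
  rw [heq]
  have hak : a + 1 ≤ (60 * M + 1) * R ^ 3 := by
    have hR3 : (1:ℝ) ≤ R ^ 3 := by nlinarith
    have hRR3 : R ≤ R ^ 3 := by nlinarith
    have key : 6 * R * M ≤ 6 * R ^ 3 * M := by nlinarith
    nlinarith
  calc (a + 1) / (π * R ^ 3) ≤ ((60 * M + 1) * R ^ 3) / (π * R ^ 3) := by gcongr
    _ = (60 * M + 1) / π := by
        rw [show (60 * M + 1) * R ^ 3 = R ^ 3 * (60 * M + 1) by ring,
          show π * R ^ 3 = R ^ 3 * π by ring,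
          mul_div_mul_left _ _ (by positivity : (R:ℝ) ^ 3 ≠ 0)]

/-- Liouville-type theorem: an entire function belonging to `H¹` of both the upper and
the lower half-plane with respect to the measure `dx/(1+x²)` (i.e. with uniformly
bounded integrals `∫ |F(x+iy)| dx/(1+x²)` over all horizontal lines `y > 0` and all
`y < 0`) is constant. -/
theorem entire_H1_both_halfPlanes_const (F : ℂ → ℂ) (hF : Differentiable ℂ F)
    (hupper : ∃ C : ℝ, ∀ y : ℝ, 0 < y →
      ∫⁻ x : ℝ, ENNReal.ofReal (‖F (x + y * Complex.I)‖ / (1 + x ^ 2)) ≤ ENNReal.ofReal C)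
    (hlower : ∃ C : ℝ, ∀ y : ℝ, y < 0 →
      ∫⁻ x : ℝ, ENNReal.ofReal (‖F (x + y * Complex.I)‖ / (1 + x ^ 2)) ≤ ENNReal.ofReal C) :
    ∀ z w : ℂ, F z = F w := by
  obtain ⟨C₁, h1⟩ := hupper
  obtain ⟨C₂, h2⟩ := hlower
  set M : ℝ := max (max C₁ C₂) 0 with hMdef
  have hM0 : 0 ≤ M := le_max_right _ _
  have hbound : ∀ y : ℝ, y ≠ 0 →
      ∫⁻ x : ℝ, ENNReal.ofReal (‖F (x + y * Complex.I)‖ / (1 + x ^ 2)) ≤ ENNReal.ofReal M := by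
    intro y hy
    rcases lt_or_gt_of_ne hy with hneg | hpos
    · exact le_trans (h2 y hneg)
        (ENNReal.ofReal_le_ofReal (le_max_of_le_left (le_max_right _ _)))
    · exact le_trans (h1 y hpos)
        (ENNReal.ofReal_le_ofReal (le_max_of_le_left (le_max_left _ _)))
  have hderiv_diff : Differentiable ℂ (deriv F) :=
    analyticOnNhd_univ_iff_differentiable.mp (analyticOnNhd_univ_iff_differentiable.mpr hF).deriv
  have hbdd : IsBounded (range (deriv F)) := by
    apply isBounded_iff_forall_norm_le.mpr
    exact ⟨(60 * M + 1) / π, by rintro _ ⟨z, rfl⟩; exact uniformDerivBound' F hF M hM0 hbound z⟩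
  have hconstd : ∀ z : ℂ, deriv F z = deriv F 0 := fun z =>
    hderiv_diff.apply_eq_apply_of_bounded hbdd z 0
  set c : ℂ := deriv F 0 with hcdef
  have haffine : ∀ z : ℂ, F z = F 0 + z * c := by
    intro z
    have hH : Differentiable ℂ (fun z : ℂ => F z - z * c) :=
      hF.sub (fun x => (differentiableAt_id.mul_const c))
    have hH' : ∀ x : ℂ, deriv (fun z : ℂ => F z - z * c) x = 0 := by
      intro x
      rw [deriv_fun_sub (hF x) (differentiableAt_fun_id.mul_const c),
        deriv_mul_const differentiableAt_fun_id]
      simp [hconstd x]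
    have hconst := is_const_of_deriv_eq_zero hH hH' z 0
    simp only [zero_mul, sub_zero] at hconst
    linear_combination hconst
  have hc0 : c = 0 := by
    by_contra hc
    have hcpos : 0 < ‖c‖ := norm_pos_iff.mpr hc
    set Y : ℝ := (2 * M + ‖F 0‖ + 2) / ‖c‖ with hYdef
    have hY : 0 < Y := by positivity
    have hYc : Y * ‖c‖ = 2 * M + ‖F 0‖ + 2 := div_mul_cancel₀ _ hcpos.ne'
    have hlow : ∀ x ∈ Icc (0:ℝ) 1, (M + 1 : ℝ) ≤ ‖F (x + Y * Complex.I)‖ / (1 + x ^ 2) := by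
      intro x hx
      have hxx : (1:ℝ) + x ^ 2 ≤ 2 := by nlinarith [hx.1, hx.2]
      have h1x : (0:ℝ) < 1 + x ^ 2 := by positivity
      have habs : Y ≤ ‖(↑x + ↑Y * Complex.I : ℂ)‖ := by
        have him := Complex.abs_im_le_norm (↑x + ↑Y * Complex.I)
        simp only [Complex.add_im, Complex.ofReal_im, Complex.mul_im, Complex.ofReal_re,
          Complex.I_im, Complex.I_re, mul_one, mul_zero, zero_add, add_zero] at him
        rw [abs_of_pos hY] at him
        exact him
      have hnorm : Y * ‖c‖ - ‖F 0‖ ≤ ‖F (↑x + ↑Y * Complex.I)‖ := by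
        rw [haffine (↑x + ↑Y * Complex.I)]
        have htri : ‖(↑x + ↑Y * Complex.I) * c‖ - ‖-(F 0)‖
            ≤ ‖(↑x + ↑Y * Complex.I) * c - -(F 0)‖ := norm_sub_norm_le _ _
        rw [norm_neg, sub_neg_eq_add] at htri
        have hmul : Y * ‖c‖ ≤ ‖(↑x + ↑Y * Complex.I) * c‖ := by
          rw [norm_mul]
          exact mul_le_mul_of_nonneg_right habs (norm_nonneg c)
        calc Y * ‖c‖ - ‖F 0‖ ≤ ‖(↑x + ↑Y * Complex.I) * c‖ - ‖F 0‖ := by linarith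
          _ ≤ ‖(↑x + ↑Y * Complex.I) * c + F 0‖ := htri
          _ = ‖F 0 + (↑x + ↑Y * Complex.I) * c‖ := by rw [add_comm]
      rw [le_div_iff₀ h1x]
      nlinarith [norm_nonneg (F 0)]
    have hge : ENNReal.ofReal (M + 1)
        ≤ ∫⁻ x : ℝ, ENNReal.ofReal (‖F (x + Y * Complex.I)‖ / (1 + x ^ 2)) := by
      calc ENNReal.ofReal (M + 1)
          = ∫⁻ _ in Icc (0:ℝ) 1, ENNReal.ofReal (M + 1) := by
            rw [setLIntegral_const, Real.volume_Icc]
            simp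
        _ ≤ ∫⁻ x in Icc (0:ℝ) 1, ENNReal.ofReal (‖F (x + Y * Complex.I)‖ / (1 + x ^ 2)) :=
            setLIntegral_mono' measurableSet_Icc
              (fun x hx => ENNReal.ofReal_le_ofReal (hlow x hx))
        _ ≤ ∫⁻ x : ℝ, ENNReal.ofReal (‖F (x + Y * Complex.I)‖ / (1 + x ^ 2)) :=
            setLIntegral_le_lintegral _ _
    have hfin := le_trans hge (hbound Y (ne_of_gt hY))
    rw [ENNReal.ofReal_le_ofReal_iff hM0] at hfin
    linarith
  intro z w
  rw [haffine z, haffine w, hc0]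
  simp
end
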